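/- Let 0<q<1 and let x₀ ∈ (1,2) be the unique positive zero of the q-digamma function ψ_q. Then Γ_q(x) ≥ Γ_q(x₀) for all x ∈ (0,∞); moreover Γ_q is strictly decreasing on (0,x₀) and strictly increasing on (x₀,∞). -/

import Mathlib

open Real

/-- The q-digamma function: ψ_q(x) = -log(1-q) + (log q)·∑_{n=1}^∞ q^{nx}/(1-q^n). -/
noncomputable def qDigamma (q x : ℝ) : ℝ :=
  -Real.log (1 - q) + Real.log q * ∑' n : ℕ, q ^ (((n : ℝ) + 1) * x) / (1 - q ^ (n + 1))

/-- The q-gamma function: Γ_q(x) = (q;q)_∞/(q^x;q)_∞ · (1-q)^{1-x}. -/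
noncomputable def qGamma (q x : ℝ) : ℝ :=
  ((∏' i : ℕ, (1 - q ^ (i + 1))) / ∏' i : ℕ, (1 - q ^ (x + (i : ℝ)))) * (1 - q) ^ (1 - x)

/-- The q-bracket: [x]_q = (1-q^x)/(1-q). -/
noncomputable def qBracket (q x : ℝ) : ℝ := (1 - q ^ x) / (1 - q)
namespace QGammaAux

variable {q : ℝ}

lemma summable_qpow (hq0 : 0 < q) (hq1 : q < 1) (x : ℝ) :
    Summable (fun i : ℕ => q ^ (x + (i : ℝ))) := by
  have h : (fun i : ℕ => q ^ (x + (i : ℝ))) = fun i : ℕ => q ^ x * q ^ i := by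
    ext i
    rw [Real.rpow_add hq0, Real.rpow_natCast]
  rw [h]
  exact (summable_geometric_of_lt_one hq0.le hq1).mul_left _

lemma qpow_pos (hq0 : 0 < q) (x : ℝ) : 0 < q ^ x := Real.rpow_pos_of_pos hq0 x

lemma qpow_lt_one (hq0 : 0 < q) (hq1 : q < 1) {x : ℝ} (hx : 0 < x) : q ^ x < 1 :=
  Real.rpow_lt_one hq0.le hq1 hx

lemma qpow_le (hq0 : 0 < q) (hq1 : q < 1) {x y : ℝ} (hxy : x ≤ y) : q ^ y ≤ q ^ x :=
  Real.rpow_le_rpow_of_exponent_ge hq0 hq1.le hxy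

lemma one_sub_pos (hq0 : 0 < q) (hq1 : q < 1) {x : ℝ} (hx : 0 < x) (i : ℕ) :
    0 < 1 - q ^ (x + (i : ℝ)) := by
  have h1 : q ^ (x + (i : ℝ)) ≤ q ^ x := qpow_le hq0 hq1 (le_add_of_nonneg_right (Nat.cast_nonneg i))
  have h2 : q ^ x < 1 := qpow_lt_one hq0 hq1 hx
  linarith

lemma neg_log_one_sub_le {t : ℝ} (h0 : 0 ≤ t) (h1 : t < 1) :
    -Real.log (1 - t) ≤ t / (1 - t) := by
  have ht : 0 < 1 - t := by linarith
  have := Real.log_le_sub_one_of_pos (x := (1 - t)⁻¹) (by positivity)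
  rw [Real.log_inv] at this
  have h2 : -Real.log (1 - t) ≤ (1 - t)⁻¹ - 1 := this
  have heq : (1 - t)⁻¹ - 1 = t / (1 - t) := by field_simp; ring
  linarith [heq ▸ h2]

lemma log_one_sub_nonpos {t : ℝ} (h0 : 0 ≤ t) (h1 : t < 1) : Real.log (1 - t) ≤ 0 :=
  Real.log_nonpos (by linarith) (by linarith)

/-- `S q x = ∑ log(1 - q^(x+i))`. -/
noncomputable def S (q x : ℝ) : ℝ := ∑' i : ℕ, Real.log (1 - q ^ (x + (i : ℝ)))

noncomputable def T (q x : ℝ) : ℝ := ∑' i : ℕ, q ^ (x + (i : ℝ)) / (1 - q ^ (x + (i : ℝ)))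

noncomputable def U (q x : ℝ) : ℝ := ∑' n : ℕ, q ^ (((n : ℝ) + 1) * x) / (1 - q ^ (n + 1))

lemma summable_logS (hq0 : 0 < q) (hq1 : q < 1) {x : ℝ} (hx : 0 < x) :
    Summable (fun i : ℕ => Real.log (1 - q ^ (x + (i : ℝ)))) := by
  have hqx : q ^ x < 1 := qpow_lt_one hq0 hq1 hx
  have hd : (0:ℝ) < 1 - q ^ x := by linarith
  apply Summable.of_norm_bounded (g := fun i : ℕ => (1 - q ^ x)⁻¹ * q ^ (x + (i : ℝ)))
    ((summable_qpow hq0 hq1 x).mul_left _)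
  intro i
  have h0 : 0 < q ^ (x + (i : ℝ)) := qpow_pos hq0 _
  have h1 : q ^ (x + (i : ℝ)) ≤ q ^ x := qpow_le hq0 hq1 (le_add_of_nonneg_right (Nat.cast_nonneg i))
  have h2 : q ^ (x + (i : ℝ)) < 1 := lt_of_le_of_lt h1 hqx
  have hb := neg_log_one_sub_le h0.le h2
  have hnp := log_one_sub_nonpos h0.le h2
  rw [Real.norm_eq_abs, abs_of_nonpos hnp]
  calc -Real.log (1 - q ^ (x + (i:ℝ))) ≤ q ^ (x + (i:ℝ)) / (1 - q ^ (x + (i:ℝ))) := hb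
    _ ≤ (1 - q ^ x)⁻¹ * q ^ (x + (i:ℝ)) := by
        rw [div_eq_inv_mul]
        exact mul_le_mul_of_nonneg_right (inv_anti₀ hd (by linarith)) h0.le

/-- exp of a convergent sum of logs is the infinite product. -/
lemma hasProd_of_hasSum_log {a : ℕ → ℝ} (ha : ∀ i, 0 < a i) {Sv : ℝ}
    (hS : HasSum (fun i => Real.log (a i)) Sv) : HasProd a (Real.exp Sv) := by
  have h := (Real.continuous_exp.continuousAt (x := Sv)).tendsto.comp hS
  have heq : (fun F : Finset ℕ => Real.exp (∑ i ∈ F, Real.log (a i)))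
      = fun F : Finset ℕ => ∏ i ∈ F, a i := by
    ext F
    rw [Real.exp_sum]
    exact Finset.prod_congr rfl fun i _ => Real.exp_log (ha i)
  unfold HasProd
  rw [← heq]
  exact h

lemma tprod_eq_exp_S (hq0 : 0 < q) (hq1 : q < 1) {x : ℝ} (hx : 0 < x) :
    (∏' i : ℕ, (1 - q ^ (x + (i : ℝ)))) = Real.exp (S q x) :=
  (hasProd_of_hasSum_log (fun i => one_sub_pos hq0 hq1 hx i)
    (summable_logS hq0 hq1 hx).hasSum).tprod_eq

lemma qGamma_eq_exp (hq0 : 0 < q) (hq1 : q < 1) {x : ℝ} (hx : 0 < x) :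
    qGamma q x = Real.exp (S q 1 - S q x + Real.log (1 - q) * (1 - x)) := by
  have hnum : (∏' i : ℕ, (1 - q ^ (i + 1))) = Real.exp (S q 1) := by
    rw [← tprod_eq_exp_S hq0 hq1 one_pos]
    apply tprod_congr
    intro i
    congr 1
    rw [show (1 : ℝ) + (i:ℝ) = ((i + 1 : ℕ) : ℝ) by push_cast; ring, Real.rpow_natCast]
  have h1q : (0:ℝ) < 1 - q := by linarith
  rw [qGamma, hnum, tprod_eq_exp_S hq0 hq1 hx, Real.rpow_def_of_pos h1q,
    Real.exp_add, Real.exp_sub]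

lemma hasDerivAt_term (hq0 : 0 < q) (hq1 : q < 1) {y : ℝ} (hy : 0 < y) (i : ℕ) :
    HasDerivAt (fun z => Real.log (1 - q ^ (z + (i : ℝ))))
      (-(q ^ (y + (i : ℝ)) * Real.log q) / (1 - q ^ (y + (i : ℝ)))) y := by
  have hpow : HasDerivAt (fun z => q ^ (z + (i : ℝ))) (q ^ (y + (i : ℝ)) * Real.log q) y := by
    have h := (Real.hasStrictDerivAt_const_rpow hq0 (y + (i : ℝ))).hasDerivAt
    have h2 := h.comp y ((hasDerivAt_id y).add_const (i : ℝ))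
    rw [mul_one] at h2
    exact h2
  have hne : (1 - q ^ (y + (i : ℝ))) ≠ 0 := (one_sub_pos hq0 hq1 hy i).ne'
  have := ((hasDerivAt_const y (1:ℝ)).sub hpow).log (by simpa using hne)
  simpa using this

lemma hasDerivAt_S (hq0 : 0 < q) (hq1 : q < 1) {x : ℝ} (hx : 0 < x) :
    HasDerivAt (S q) (-Real.log q * T q x) x := by
  set c := x / 2 with hc
  have hc0 : 0 < c := by positivity
  have hqc : q ^ c < 1 := qpow_lt_one hq0 hq1 hc0
  have hdc : (0:ℝ) < 1 - q ^ c := by linarith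
  have key : HasDerivAt (fun z => ∑' i : ℕ, Real.log (1 - q ^ (z + (i : ℝ))))
      (∑' i : ℕ, -(q ^ (x + (i : ℝ)) * Real.log q) / (1 - q ^ (x + (i : ℝ)))) x := by
    apply hasDerivAt_tsum_of_isPreconnected
      (u := fun i : ℕ => |Real.log q| * (1 - q ^ c)⁻¹ * (q ^ c * q ^ i))
      (t := Set.Ioi c)
      (g' := fun i y => -(q ^ (y + (i : ℝ)) * Real.log q) / (1 - q ^ (y + (i : ℝ))))
      (y₀ := x)
    · exact ((summable_geometric_of_lt_one hq0.le hq1).mul_left _).mul_left _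
    · exact isOpen_Ioi
    · exact isPreconnected_Ioi
    · intro i y hy
      exact hasDerivAt_term hq0 hq1 (lt_trans hc0 hy) i
    · intro i y hy
      have hy0 : 0 < y := lt_trans hc0 hy
      have h0 : 0 < q ^ (y + (i:ℝ)) := qpow_pos hq0 _
      have hle : q ^ (y + (i:ℝ)) ≤ q ^ (c + (i:ℝ)) :=
        qpow_le hq0 hq1 (by have := le_of_lt (Set.mem_Ioi.mp hy); linarith)
      have hceq : q ^ (c + (i:ℝ)) = q ^ c * q ^ i := by
        rw [Real.rpow_add hq0, Real.rpow_natCast]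
      have hd : 0 < 1 - q ^ (y + (i:ℝ)) := one_sub_pos hq0 hq1 hy0 i
      have hd2 : 1 - q ^ c ≤ 1 - q ^ (y + (i:ℝ)) := by
        have h3 : q ^ (y + (i:ℝ)) ≤ q ^ c :=
          qpow_le hq0 hq1
            (by have := le_of_lt (Set.mem_Ioi.mp hy); have := (Nat.cast_nonneg i : (0:ℝ) ≤ i); linarith)
        linarith
      rw [Real.norm_eq_abs, abs_div, abs_of_pos hd, abs_neg, abs_mul, abs_of_pos h0]
      rw [div_le_iff₀ hd]
      calc q ^ (y + (i:ℝ)) * |Real.log q|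
          ≤ (q ^ c * q ^ i) * |Real.log q| := by
            apply mul_le_mul_of_nonneg_right _ (abs_nonneg _)
            exact hle.trans_eq hceq
        _ = |Real.log q| * (1 - q ^ c)⁻¹ * (q ^ c * q ^ i) * (1 - q ^ c) := by
            field_simp
        _ ≤ |Real.log q| * (1 - q ^ c)⁻¹ * (q ^ c * q ^ i) * (1 - q ^ (y + (i:ℝ))) := by
            apply mul_le_mul_of_nonneg_left hd2
            positivity
    · show x ∈ Set.Ioi c
      simp only [Set.mem_Ioi, hc]
      linarith
    · exact summable_logS hq0 hq1 hx
    · show x ∈ Set.Ioi c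
      simp only [Set.mem_Ioi, hc]
      linarith
  have heq : (∑' i : ℕ, -(q ^ (x + (i : ℝ)) * Real.log q) / (1 - q ^ (x + (i : ℝ))))
      = -Real.log q * T q x := by
    rw [T, ← tsum_mul_left]
    apply tsum_congr
    intro i
    ring
  rw [heq] at key
  exact key

lemma hasDerivAt_F (hq0 : 0 < q) (hq1 : q < 1) {x : ℝ} (hx : 0 < x) :
    HasDerivAt (fun z => S q 1 - S q z + Real.log (1 - q) * (1 - z))
      (Real.log q * T q x - Real.log (1 - q)) x := by
  have h1 : HasDerivAt (fun z => S q 1 - S q z) (-(-Real.log q * T q x)) x := by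
    have h := (hasDerivAt_const x (S q 1)).sub (hasDerivAt_S hq0 hq1 hx)
    rw [show -(-Real.log q * T q x) = 0 - -Real.log q * T q x by ring]
    exact h
  have h2 : HasDerivAt (fun z => Real.log (1 - q) * (1 - z)) (Real.log (1 - q) * (0 - 1)) x :=
    ((hasDerivAt_const x (1:ℝ)).sub (hasDerivAt_id x)).const_mul _
  have h3 := h1.add h2
  rw [show Real.log q * T q x - Real.log (1 - q)
      = -(-Real.log q * T q x) + Real.log (1 - q) * (0 - 1) by ring]
  exact h3

lemma geo_aux {a : ℝ} (ha0 : 0 ≤ a) (ha1 : a < 1) :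
    ∑' m : ℕ, a ^ (m + 1) = a / (1 - a) := by
  have h : (fun m : ℕ => a ^ (m + 1)) = fun m : ℕ => a ^ m * a := by
    ext m; rw [pow_succ]
  rw [h, tsum_mul_right, tsum_geometric_of_lt_one ha0 ha1, div_eq_mul_inv, mul_comm]

lemma rpow_term_eq (hq0 : 0 < q) (x : ℝ) (i m : ℕ) :
    q ^ ((x + (i : ℝ)) * ((m : ℝ) + 1)) = (q ^ (x + (i : ℝ))) ^ (m + 1) := by
  rw [show ((m : ℝ) + 1) = ((m + 1 : ℕ) : ℝ) by push_cast; ring,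
    Real.rpow_natCast (q ^ (x + (i:ℝ))) (m+1) |>.symm, ← Real.rpow_mul hq0.le]

lemma geo_term (hq0 : 0 < q) (hq1 : q < 1) {x : ℝ} (hx : 0 < x) (i : ℕ) :
    q ^ (x + (i : ℝ)) / (1 - q ^ (x + (i : ℝ)))
      = ∑' m : ℕ, q ^ ((x + (i : ℝ)) * ((m : ℝ) + 1)) := by
  have ha0 : 0 < q ^ (x + (i:ℝ)) := qpow_pos hq0 _
  have ha1 : q ^ (x + (i:ℝ)) < 1 := qpow_lt_one hq0 hq1 (by positivity)
  rw [tsum_congr (fun m => rpow_term_eq hq0 x i m), geo_aux ha0.le ha1]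

lemma summable_slice_m (hq0 : 0 < q) (hq1 : q < 1) {x : ℝ} (hx : 0 < x) (i : ℕ) :
    Summable (fun m : ℕ => q ^ ((x + (i : ℝ)) * ((m : ℝ) + 1))) := by
  have ha0 : 0 < q ^ (x + (i:ℝ)) := qpow_pos hq0 _
  have ha1 : q ^ (x + (i:ℝ)) < 1 := qpow_lt_one hq0 hq1 (by positivity)
  have h : (fun m : ℕ => q ^ ((x + (i:ℝ)) * ((m:ℝ) + 1)))
      = fun m : ℕ => (q ^ (x + (i:ℝ))) ^ m * q ^ (x + (i:ℝ)) := by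
    ext m; rw [rpow_term_eq hq0 x i m, pow_succ]
  rw [h]
  exact (summable_geometric_of_lt_one ha0.le ha1).mul_right _

lemma term_eq_slice_i (hq0 : 0 < q) (x : ℝ) (i m : ℕ) :
    q ^ ((x + (i : ℝ)) * ((m : ℝ) + 1))
      = q ^ (((m : ℝ) + 1) * x) * (q ^ (m + 1)) ^ i := by
  have h1 : (x + (i:ℝ)) * ((m:ℝ) + 1) = ((m:ℝ)+1)*x + (i:ℝ)*((m:ℝ)+1) := by ring
  rw [h1, Real.rpow_add hq0]
  congr 1
  rw [show (i:ℝ)*((m:ℝ)+1) = (((m+1)*i : ℕ) : ℝ) by push_cast; ring,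
    Real.rpow_natCast, pow_mul]

lemma summable_slice_i (hq0 : 0 < q) (hq1 : q < 1) (x : ℝ) (m : ℕ) :
    Summable (fun i : ℕ => q ^ ((x + (i : ℝ)) * ((m : ℝ) + 1))) := by
  have hlt : q ^ (m+1) < 1 := pow_lt_one₀ hq0.le hq1 (Nat.succ_ne_zero m)
  have hp : (0:ℝ) ≤ q ^ (m+1) := by positivity
  have h : (fun i : ℕ => q ^ ((x + (i:ℝ)) * ((m:ℝ) + 1)))
      = fun i : ℕ => q ^ (((m:ℝ)+1)*x) * (q ^ (m+1)) ^ i := by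
    ext i; exact term_eq_slice_i hq0 x i m
  rw [h]
  exact (summable_geometric_of_lt_one hp hlt).mul_left _

lemma tsum_slice_i (hq0 : 0 < q) (hq1 : q < 1) (x : ℝ) (m : ℕ) :
    ∑' i : ℕ, q ^ ((x + (i : ℝ)) * ((m : ℝ) + 1))
      = q ^ (((m : ℝ) + 1) * x) / (1 - q ^ (m + 1)) := by
  have hlt : q ^ (m+1) < 1 := pow_lt_one₀ hq0.le hq1 (Nat.succ_ne_zero m)
  have hp : (0:ℝ) ≤ q ^ (m+1) := by positivity
  rw [tsum_congr (fun i => term_eq_slice_i hq0 x i m), tsum_mul_left,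
    tsum_geometric_of_lt_one hp hlt, div_eq_mul_inv]

lemma summable_uncurry (hq0 : 0 < q) (hq1 : q < 1) {x : ℝ} (hx : 0 < x) :
    Summable (fun p : ℕ × ℕ => q ^ ((x + (p.1 : ℝ)) * ((p.2 : ℝ) + 1))) := by
  have hqx0 : 0 < q ^ x := qpow_pos hq0 x
  have hqx1 : q ^ x < 1 := qpow_lt_one hq0 hq1 hx
  have h1 : Summable (fun i : ℕ => (q:ℝ) ^ i) := summable_geometric_of_lt_one hq0.le hq1
  have h2 : Summable (fun m : ℕ => q ^ x * (q ^ x) ^ m) :=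
    (summable_geometric_of_lt_one hqx0.le hqx1).mul_left _
  have h3 : (0:ℕ→ℝ) ≤ (fun i : ℕ => (q:ℝ) ^ i) := fun i => by positivity
  have h4 : (0:ℕ→ℝ) ≤ (fun m : ℕ => q ^ x * (q ^ x) ^ m) := fun m => by positivity
  have hbig := h1.mul_of_nonneg h2 h3 h4
  refine Summable.of_nonneg_of_le (fun p => (qpow_pos hq0 _).le) ?_ hbig
  rintro ⟨i, m⟩
  show q ^ ((x + (i:ℝ)) * ((m:ℝ) + 1)) ≤ q ^ (i:ℕ) * (q ^ x * (q ^ x) ^ m)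
  have heq : q ^ (x + x*(m:ℝ) + (i:ℝ)) = q ^ (i:ℕ) * (q ^ x * (q ^ x) ^ m) := by
    rw [Real.rpow_add hq0, Real.rpow_add hq0, ← Real.rpow_natCast q i,
      ← Real.rpow_natCast (q ^ x) m, ← Real.rpow_mul hq0.le]
    ring
  rw [← heq]
  apply qpow_le hq0 hq1
  have h5 : (0:ℝ) ≤ (i:ℝ) := Nat.cast_nonneg i
  have h6 : (0:ℝ) ≤ (m:ℝ) := Nat.cast_nonneg m
  nlinarith

lemma T_eq_U (hq0 : 0 < q) (hq1 : q < 1) {x : ℝ} (hx : 0 < x) : T q x = U q x := by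
  have hs : Summable (Function.uncurry (fun i m : ℕ => q ^ ((x + (i : ℝ)) * ((m : ℝ) + 1)))) :=
    summable_uncurry hq0 hq1 hx
  calc T q x = ∑' (i : ℕ) (m : ℕ), q ^ ((x + (i:ℝ)) * ((m:ℝ) + 1)) :=
        tsum_congr (fun i => geo_term hq0 hq1 hx i)
    _ = ∑' (m : ℕ) (i : ℕ), q ^ ((x + (i:ℝ)) * ((m:ℝ) + 1)) :=
        (Summable.tsum_comm' hs (fun i => summable_slice_m hq0 hq1 hx i)
          (fun m => summable_slice_i hq0 hq1 x m)).symm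
    _ = U q x := tsum_congr (fun m => tsum_slice_i hq0 hq1 x m)

lemma summable_U (hq0 : 0 < q) (hq1 : q < 1) {x : ℝ} (hx : 0 < x) :
    Summable (fun n : ℕ => q ^ (((n : ℝ) + 1) * x) / (1 - q ^ (n + 1))) := by
  have hqx0 : 0 < q ^ x := qpow_pos hq0 x
  have hqx1 : q ^ x < 1 := qpow_lt_one hq0 hq1 hx
  apply Summable.of_nonneg_of_le _ _ (((summable_geometric_of_lt_one hqx0.le hqx1).mul_left
    ((1-q)⁻¹ * q ^ x)))
  · intro n
    have h1 : q ^ (n+1) < 1 := pow_lt_one₀ hq0.le hq1 (Nat.succ_ne_zero n)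
    exact div_nonneg (Real.rpow_pos_of_pos hq0 _).le (by linarith)
  · intro n
    have h1 : q ^ (n+1) ≤ q := by
      calc q ^ (n+1) ≤ q ^ 1 := pow_le_pow_of_le_one hq0.le hq1.le (by omega)
        _ = q := pow_one q
    have hd : 0 < 1 - q ^ (n+1) := by
      have h2 : q ^ (n+1) < 1 := pow_lt_one₀ hq0.le hq1 (Nat.succ_ne_zero n)
      linarith
    have hnum : q ^ (((n:ℝ)+1)*x) = q ^ x * (q ^ x) ^ n := by
      rw [show ((n:ℝ)+1)*x = x + x*(n:ℝ) by ring, Real.rpow_add hq0,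
        ← Real.rpow_natCast (q ^ x) n, ← Real.rpow_mul hq0.le]
    rw [hnum, div_le_iff₀ hd]
    have hq1q : (0:ℝ) < 1 - q := by linarith
    calc q ^ x * (q ^ x) ^ n = (1-q)⁻¹ * q ^ x * (q ^ x) ^ n * (1 - q) := by
          field_simp
      _ ≤ (1-q)⁻¹ * q ^ x * (q ^ x) ^ n * (1 - q ^ (n+1)) := by
          apply mul_le_mul_of_nonneg_left (by linarith)
          positivity

lemma qDigamma_eq_U (x : ℝ) : qDigamma q x = Real.log q * U q x - Real.log (1 - q) := by
  rw [qDigamma, U]; ring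

lemma qDigamma_strictMono (hq0 : 0 < q) (hq1 : q < 1) {x y : ℝ} (hx : 0 < x) (hxy : x < y) :
    qDigamma q x < qDigamma q y := by
  have hlogq : Real.log q < 0 := Real.log_neg hq0 hq1
  have hU : U q y < U q x := by
    rw [U, U]
    apply Summable.tsum_lt_tsum_of_nonneg (i := 0)
    · intro n
      have h1 : q ^ (n+1) < 1 := pow_lt_one₀ hq0.le hq1 (Nat.succ_ne_zero n)
      exact div_nonneg (Real.rpow_pos_of_pos hq0 _).le (by linarith)
    · intro n
      have h1 : q ^ (n+1) < 1 := pow_lt_one₀ hq0.le hq1 (Nat.succ_ne_zero n)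
      have hd : (0:ℝ) < 1 - q ^ (n+1) := by linarith
      have hnum : q ^ (((n:ℝ)+1)*y) ≤ q ^ (((n:ℝ)+1)*x) := by
        apply qpow_le hq0 hq1
        have h5 : (0:ℝ) ≤ (n:ℝ) := Nat.cast_nonneg n
        nlinarith
      exact (div_le_div_iff_of_pos_right hd).mpr hnum
    · have h1 : q ^ (0+1) < 1 := pow_lt_one₀ hq0.le hq1 one_ne_zero
      have hd : (0:ℝ) < 1 - q ^ (0+1) := by linarith
      have hnum : q ^ ((((0:ℕ):ℝ)+1)*y) < q ^ ((((0:ℕ):ℝ)+1)*x) := by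
        apply Real.rpow_lt_rpow_of_exponent_gt hq0 hq1
        push_cast
        linarith
      exact (div_lt_div_iff_of_pos_right hd).mpr hnum
    · exact summable_U hq0 hq1 hx
  rw [qDigamma_eq_U, qDigamma_eq_U]
  have := mul_lt_mul_of_neg_left hU hlogq
  linarith

end QGammaAux

open QGammaAux in
/-- Γ_q(x) ≥ Γ_q(x₀) for all x > 0, where x₀ ∈ (1,2) is the zero of ψ_q;
moreover Γ_q is strictly decreasing on (0,x₀) and strictly increasing on (x₀,∞). -/
theorem qGamma_min_at_qDigamma_zero (q : ℝ) (hq0 : 0 < q) (hq1 : q < 1)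
    (x₀ : ℝ) (hx₀ : x₀ ∈ Set.Ioo (1 : ℝ) 2) (hzero : qDigamma q x₀ = 0) :
    (∀ x : ℝ, 0 < x → qGamma q x₀ ≤ qGamma q x) ∧
    StrictAntiOn (qGamma q) (Set.Ioo 0 x₀) ∧
    StrictMonoOn (qGamma q) (Set.Ioi x₀) := by
  have hx₀pos : 0 < x₀ := lt_trans one_pos hx₀.1
  set F : ℝ → ℝ := fun z => S q 1 - S q z + Real.log (1 - q) * (1 - z) with hFdef
  have hGF : ∀ z : ℝ, 0 < z → qGamma q z = Real.exp (F z) := fun z hz =>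
    qGamma_eq_exp hq0 hq1 hz
  have hFd : ∀ z : ℝ, 0 < z → HasDerivAt F (qDigamma q z) z := by
    intro z hz
    have h := hasDerivAt_F hq0 hq1 hz
    rw [T_eq_U hq0 hq1 hz, ← qDigamma_eq_U] at h
    exact h
  have psi_neg : ∀ z ∈ Set.Ioo (0:ℝ) x₀, qDigamma q z < 0 := by
    intro z hz
    have := qDigamma_strictMono hq0 hq1 hz.1 hz.2
    linarith [hzero ▸ this]
  have psi_pos : ∀ z ∈ Set.Ioi x₀, 0 < qDigamma q z := by
    intro z hz
    have := qDigamma_strictMono hq0 hq1 hx₀pos hz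
    linarith [hzero ▸ this]
  have hanti : StrictAntiOn F (Set.Ioc 0 x₀) := by
    apply strictAntiOn_of_deriv_neg (convex_Ioc 0 x₀)
    · intro z hz
      exact (hFd z hz.1).continuousAt.continuousWithinAt
    · intro z hz
      rw [interior_Ioc] at hz
      rw [(hFd z hz.1).deriv]
      exact psi_neg z hz
  have hmono : StrictMonoOn F (Set.Ici x₀) := by
    apply strictMonoOn_of_deriv_pos (convex_Ici x₀)
    · intro z hz
      exact (hFd z (lt_of_lt_of_le hx₀pos hz)).continuousAt.continuousWithinAt
    · intro z hz
      rw [interior_Ici] at hz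
      rw [(hFd z (lt_trans hx₀pos hz)).deriv]
      exact psi_pos z hz
  refine ⟨?_, ?_, ?_⟩
  · intro x hx
    rcases lt_trichotomy x x₀ with h | h | h
    · have hFlt : F x₀ < F x := hanti ⟨hx, h.le⟩ ⟨hx₀pos, le_refl x₀⟩ h
      rw [hGF x hx, hGF x₀ hx₀pos]
      exact Real.exp_le_exp.mpr hFlt.le
    · rw [h]
    · have hFlt : F x₀ < F x := hmono (Set.self_mem_Ici) (Set.mem_Ici.mpr h.le) h
      rw [hGF x hx, hGF x₀ hx₀pos]
      exact Real.exp_le_exp.mpr hFlt.le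
  · intro a ha b hb hab
    have hFlt : F b < F a := hanti ⟨ha.1, ha.2.le⟩ ⟨hb.1, hb.2.le⟩ hab
    rw [hGF a ha.1, hGF b hb.1]
    exact Real.exp_lt_exp.mpr hFlt
  · intro a ha b hb hab
    have ha0 : 0 < a := lt_trans hx₀pos ha
    have hb0 : 0 < b := lt_trans hx₀pos hb
    have hFlt : F a < F b := hmono (Set.mem_Ici.mpr (le_of_lt (Set.mem_Ioi.mp ha))) (Set.mem_Ici.mpr (le_of_lt (Set.mem_Ioi.mp hb))) hab
    rw [hGF a ha0, hGF b hb0]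
    exact Real.exp_lt_exp.mpr hFlt
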